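/- Let G be a graph with δ(G) ≥ 3 and suppose every cycle of G has odd length. Then any two distinct cycles of G are vertex-disjoint or the graph contains an even cycle; in particular, if C is an odd cycle and P, Q are paths leaving C from distinct vertices c₀ ≠ cᵢ of C with P ∩ C = {c₀}, Q ∩ C = {cᵢ}, and P ∩ Q ≠ ∅, then G contains an even cycle. -/

import Mathlib

open SimpleGraph

variable {V : Type*}

/-- Closure of the filled set `S` under the zero forcing color change rule:
a filled vertex with exactly one unfilled neighbor fills that neighbor. -/
inductive ZFDerived (G : SimpleGraph V) (S : Set V) : V → Prop
  | init {v : V} : v ∈ S → ZFDerived G S v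
  | force {v w : V} : ZFDerived G S v → G.Adj v w →
      (∀ u, G.Adj v u → u ≠ w → ZFDerived G S u) → ZFDerived G S w

/-- The derived set of `S`. -/
def ZFDerivedSet (G : SimpleGraph V) (S : Set V) : Set V := {v | ZFDerived G S v}

/-- `S` is a zero forcing set if its derived set is all of `V`. -/
def IsZeroForcing (G : SimpleGraph V) (S : Set V) : Prop :=
  ZFDerivedSet G S = Set.univ

/-- `S` is a failed zero forcing set if its derived set is not all of `V`. -/
def IsFailed (G : SimpleGraph V) (S : Set V) : Prop :=
  ZFDerivedSet G S ≠ Set.univ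

/-- The failed zero forcing number `F(G)`: the maximum size of a failed zero forcing set. -/
noncomputable def failedZF (G : SimpleGraph V) : ℕ :=
  sSup {k | ∃ S : Finset V, IsFailed G ↑S ∧ S.card = k}

/-- The zero forcing number `Z(G)`: the minimum size of a zero forcing set. -/
noncomputable def zfNum (G : SimpleGraph V) : ℕ :=
  sInf {k | ∃ S : Finset V, IsZeroForcing G ↑S ∧ S.card = k}

private lemma isPath_append_of_meet {V' : Type*} {G : SimpleGraph V'} {u v w : V'}
    {p : G.Walk u v} {q : G.Walk v w} (hp : p.IsPath) (hq : q.IsPath)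
    (hint : ∀ z, z ∈ p.support → z ∈ q.support → z = v) : (p.append q).IsPath := by
  apply Walk.IsPath.mk'
  rw [Walk.support_append]
  refine List.Nodup.append hp.support_nodup
    (hq.support_nodup.sublist (List.tail_sublist _)) ?_
  intro z hzp hzq
  have hzq' : z ∈ q.support := List.mem_of_mem_tail hzq
  have hzv : z = v := hint z hzp hzq'
  subst hzv
  have h2 := hq.support_nodup
  rw [Walk.support_eq_cons] at h2
  exact (List.nodup_cons.mp h2).1 hzq

private lemma isCycle_append_of_meet {V' : Type*} {G : SimpleGraph V'} {u v : V'}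
    {p : G.Walk u v} {q : G.Walk v u} (hp : p.IsPath) (hq : q.IsPath)
    (hlen : 2 ≤ p.length)
    (hint : ∀ z, z ∈ p.support → z ∈ q.support → z = u ∨ z = v) :
    (p.append q).IsCycle := by
  cases p with
  | nil => simp at hlen
  | @cons _ y _ h p' =>
    rw [Walk.cons_append, Walk.cons_isCycle_iff]
    have hp' : p'.IsPath := hp.of_cons
    have hunotp' : u ∉ p'.support := ((Walk.cons_isPath_iff _ _).mp hp).2
    constructor
    · apply isPath_append_of_meet hp' hq
      intro z hz1 hz2
      rcases hint z (by simp [hz1]) hz2 with rfl | rfl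
      · exact absurd hz1 hunotp'
      · rfl
    · rw [Walk.edges_append, List.mem_append]
      rintro (he | he)
      · exact hunotp' (Walk.fst_mem_support_of_mem_edges p' he)
      · have hy : y ∈ q.support := Walk.snd_mem_support_of_mem_edges q he
        have hyp : y ∈ (Walk.cons h p').support := by simp
        rcases hint y hyp hy with rfl | rfl
        · exact G.irrefl h
        · have hnil : p' = Walk.nil := Walk.isPath_iff_eq_nil.mp hp'
          subst hnil
          simp at hlen

private lemma exists_first_meet {V' : Type*} {G : SimpleGraph V'} {a b : V'} (P : G.Walk a b)
    (S : V' → Prop) :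
    (∃ x ∈ P.support, S x) →
    ∃ (x : V') (P' : G.Walk a x), S x ∧ (∀ z ∈ P'.support, z ∈ P.support) ∧
      (∀ z ∈ P'.support, S z → z = x) ∧ (P.IsPath → P'.IsPath) := by
  induction P with
  | nil =>
    rintro ⟨x, hx, hSx⟩
    rw [Walk.mem_support_nil_iff] at hx; subst hx
    exact ⟨_, Walk.nil, hSx, by simp, by simp, fun _ => Walk.IsPath.nil⟩
  | @cons a c b h P ih =>
    rintro ⟨x, hx, hSx⟩
    by_cases hSa : S a
    · exact ⟨a, Walk.nil, hSa, by simp, by simp, fun _ => Walk.IsPath.nil⟩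
    · have hx' : x ∈ P.support := by
        rw [Walk.support_cons, List.mem_cons] at hx
        rcases hx with rfl | hx
        · exact absurd hSx hSa
        · exact hx
      obtain ⟨y, P', hSy, hsub, hfirst, hpath⟩ := ih ⟨x, hx', hSx⟩
      refine ⟨y, Walk.cons h P', hSy, ?_, ?_, ?_⟩
      · intro z hz
        rw [Walk.support_cons, List.mem_cons] at hz ⊢
        rcases hz with rfl | hz
        · exact Or.inl rfl
        · exact Or.inr (hsub z hz)
      · intro z hz hSz
        rw [Walk.support_cons, List.mem_cons] at hz
        rcases hz with rfl | hz
        · exact absurd hSz hSa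
        · exact hfirst z hz hSz
      · intro hp
        rw [Walk.cons_isPath_iff] at hp ⊢
        exact ⟨hpath hp.1, fun haP' => hp.2 (hsub a haP')⟩

theorem even_cycle_of_intersecting_paths {V : Type*} (G : SimpleGraph V)
    (hδ : ∀ u, 3 ≤ (G.neighborSet u).ncard)
    (hodd : ∀ (u : V) (c : G.Walk u u), c.IsCycle → Odd c.length)
    (c₀ cᵢ p q : V) (C : G.Walk c₀ c₀) (hC : C.IsCycle) (hCodd : Odd C.length)
    (hci : cᵢ ∈ C.support) (hne : c₀ ≠ cᵢ)
    (P : G.Walk c₀ p) (hP : P.IsPath)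
    (Q : G.Walk cᵢ q) (hQ : Q.IsPath)
    (hPC : {x | x ∈ P.support} ∩ {x | x ∈ C.support} = {c₀})
    (hQC : {x | x ∈ Q.support} ∩ {x | x ∈ C.support} = {cᵢ})
    (hPQ : ∃ x, x ∈ P.support ∧ x ∈ Q.support) :
    ∃ (u : V) (c : G.Walk u u), c.IsCycle ∧ Even c.length := by
  classical
  have hPC' : ∀ z, z ∈ P.support → z ∈ C.support → z = c₀ := by
    intro z h1 h2
    have := (Set.ext_iff.mp hPC z).mp ⟨h1, h2⟩
    simpa using this
  have hQC' : ∀ z, z ∈ Q.support → z ∈ C.support → z = cᵢ := by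
    intro z h1 h2
    have := (Set.ext_iff.mp hQC z).mp ⟨h1, h2⟩
    simpa using this
  obtain ⟨x0, hx0P, hx0Q⟩ := hPQ
  obtain ⟨x, P', hxQ, hP'sub, hfirst, hP'path⟩ :=
    exists_first_meet P (· ∈ Q.support) ⟨x0, hx0P, hx0Q⟩
  have hP'path := hP'path hP
  have hxP : x ∈ P.support := hP'sub x P'.end_mem_support
  have hxC : x ∉ C.support := by
    intro hxC
    have hxc0 : x = c₀ := hPC' x hxP hxC
    subst hxc0
    exact hne (hQC' _ hxQ hxC)
  have hxnec0 : x ≠ c₀ := fun h => hxC (by rw [h]; exact C.start_mem_support)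
  have hxneci : x ≠ cᵢ := fun h => hxC (by rw [h]; exact hci)
  set Q' := Q.takeUntil x hxQ with hQ'def
  have hQ'path : Q'.IsPath := hQ.takeUntil hxQ
  have hQ'sub : ∀ z ∈ Q'.support, z ∈ Q.support := fun z hz =>
    Q.support_takeUntil_subset hxQ hz
  set R := P'.append Q'.reverse with hRdef
  have hRpath : R.IsPath := by
    apply isPath_append_of_meet hP'path hQ'path.reverse
    intro z hz1 hz2
    rw [Walk.support_reverse, List.mem_reverse] at hz2
    exact hfirst z hz1 (hQ'sub z hz2)
  have hP'len : 1 ≤ P'.length := by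
    rcases Nat.eq_zero_or_pos P'.length with h0 | h1
    · exact absurd (Walk.eq_of_length_eq_zero h0).symm hxnec0
    · exact h1
  have hQ'len : 1 ≤ Q'.length := by
    rcases Nat.eq_zero_or_pos Q'.length with h0 | h1
    · exact absurd (Walk.eq_of_length_eq_zero h0).symm hxneci
    · exact h1
  have hRlen : 2 ≤ R.length := by
    rw [hRdef, Walk.length_append, Walk.length_reverse]
    omega
  have hRC : ∀ z, z ∈ R.support → z ∈ C.support → z = c₀ ∨ z = cᵢ := by
    intro z hz hzC
    rw [hRdef, Walk.mem_support_append_iff] at hz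
    rcases hz with hz | hz
    · exact Or.inl (hPC' z (hP'sub z hz) hzC)
    · rw [Walk.support_reverse, List.mem_reverse] at hz
      exact Or.inr (hQC' z (hQ'sub z hz) hzC)
  set A1 := C.takeUntil cᵢ hci with hA1def
  set A2 := C.dropUntil cᵢ hci with hA2def
  have hspec : A1.append A2 = C := C.take_spec hci
  have hsupp : A1.support ++ A2.support.tail = C.support := by
    rw [← Walk.support_append, hspec]
  have htails : A1.support.tail ++ A2.support.tail = C.support.tail := by
    have h1 : A1.support = c₀ :: A1.support.tail := Walk.support_eq_cons _
    have h2 : C.support = c₀ :: C.support.tail := Walk.support_eq_cons _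
    rw [h1, h2, List.cons_append] at hsupp
    exact (List.cons.injEq _ _ _ _ ▸ hsupp : _ ∧ _).2
  have hTnodup : (A1.support.tail ++ A2.support.tail).Nodup := by
    rw [htails]; exact hC.support_nodup
  obtain ⟨hnd1, hnd2, hdisj⟩ := List.nodup_append.mp hTnodup
  have hA1len : 1 ≤ A1.length := by
    rcases Nat.eq_zero_or_pos A1.length with h0 | h1
    · exact absurd (Walk.eq_of_length_eq_zero h0) hne
    · exact h1
  have hA2len : 1 ≤ A2.length := by
    rcases Nat.eq_zero_or_pos A2.length with h0 | h1
    · exact absurd (Walk.eq_of_length_eq_zero h0).symm hne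
    · exact h1
  have hciA1 : cᵢ ∈ A1.support.tail := by
    have h := A1.end_mem_support
    rw [Walk.support_eq_cons, List.mem_cons] at h
    rcases h with h | h
    · exact absurd h.symm hne
    · exact h
  have hc0A2 : c₀ ∈ A2.support.tail := by
    have h := A2.end_mem_support
    rw [Walk.support_eq_cons, List.mem_cons] at h
    rcases h with h | h
    · exact absurd h hne
    · exact h
  have hA1path : A1.IsPath := by
    apply Walk.IsPath.mk'
    rw [Walk.support_eq_cons]
    exact List.nodup_cons.mpr ⟨fun hmem => hdisj _ hmem _ hc0A2 rfl, hnd1⟩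
  have hA2path : A2.IsPath := by
    apply Walk.IsPath.mk'
    rw [Walk.support_eq_cons]
    exact List.nodup_cons.mpr ⟨fun hmem => hdisj _ hciA1 _ hmem rfl, hnd2⟩
  have hClen : A1.length + A2.length = C.length := by
    have := congrArg Walk.length hspec
    rwa [Walk.length_append] at this
  have hD1 : (R.append A2).IsCycle := by
    apply isCycle_append_of_meet hRpath hA2path hRlen
    intro z hz hz2
    exact hRC z hz (C.support_dropUntil_subset hci hz2)
  have hD2 : (R.append A1.reverse).IsCycle := by
    apply isCycle_append_of_meet hRpath hA1path.reverse hRlen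
    intro z hz hz2
    rw [Walk.support_reverse, List.mem_reverse] at hz2
    exact hRC z hz (C.support_takeUntil_subset hci hz2)
  rcases Nat.even_or_odd (R.append A2).length with he | ho
  · exact ⟨c₀, _, hD1, he⟩
  · refine ⟨c₀, _, hD2, ?_⟩
    rw [Walk.length_append, Walk.length_reverse]
    rw [Walk.length_append] at ho
    rw [Nat.odd_iff] at ho hCodd
    rw [Nat.even_iff]
    omega
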